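/- Fix U ∈ ℝ. There exist r₀ ≥ 1 and C > 0 such that: for every r ≥ r₀, the complex number s(r·e^{iπ/4}) = 1 + 1/(r·e^{iπ/4}) − U²/(r·e^{iπ/4})³ does not lie in (−∞, 0], and, defining ω_−(k) = (U − k²·√(s(k)))/(1 + 1/k) with the principal branch of the complex square root, for every t ∈ (0, 1] one has ∫_{r₀}^∞ |exp(−i·ω_−(r·e^{iπ/4})·t)| dr ≤ C·t^{−1/2}. -/

import Mathlib

open MeasureTheory

/-- The point `k = r·e^{iπ/4}` on the ray of argument `π/4`. -/
noncomputable def rayPt (r : ℝ) : ℂ := (r : ℂ) * Complex.exp (Complex.I * (Real.pi / 4))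

/-- The radicand `s(k) = 1 + 1/k − U²/k³`. -/
noncomputable def plateRad (U : ℝ) (k : ℂ) : ℂ := 1 + 1 / k - (U : ℂ) ^ 2 / k ^ 3

/-- The dispersion root `ω₋(k) = (U − k²√(s(k)))/(1+1/k)` (principal branch). -/
noncomputable def plateOmegaMC (U : ℝ) (k : ℂ) : ℂ :=
  ((U : ℂ) - k ^ 2 * plateRad U k ^ ((1 : ℂ) / 2)) / (1 + 1 / k)

lemma rayPt_abs (r : ℝ) (hr : 0 ≤ r) : ‖rayPt r‖ = r := by
  simp [rayPt, Complex.norm_exp, _root_.abs_of_nonneg hr]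

lemma rayPt_sq (r : ℝ) : (rayPt r) ^ 2 = (r : ℂ) ^ 2 * Complex.I := by
  unfold rayPt
  rw [mul_pow, ← Complex.exp_nat_mul]
  have h : ((2 : ℕ) : ℂ) * (Complex.I * (Real.pi / 4)) = ((Real.pi / 2 : ℝ) : ℂ) * Complex.I := by
    push_cast; ring
  rw [h, Complex.exp_mul_I]
  rw [← Complex.ofReal_cos, ← Complex.ofReal_sin, Real.cos_pi_div_two, Real.sin_pi_div_two]
  simp

lemma rayPt_ne_zero (r : ℝ) (hr : 0 < r) : rayPt r ≠ 0 := by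
  intro h
  have := rayPt_abs r hr.le
  rw [h] at this; simp at this; linarith

lemma cpow_half_re_nonneg (s : ℂ) (hs : s ≠ 0) : 0 ≤ (s ^ ((1 : ℂ) / 2)).re := by
  rw [Complex.cpow_def_of_ne_zero hs, Complex.exp_re]
  have him : (Complex.log s * ((1 : ℂ) / 2)).im = s.arg / 2 := by
    simp [Complex.mul_im, Complex.log_im]; ring
  rw [him]
  have h1 : -(Real.pi / 2) ≤ s.arg / 2 := by
    have := Complex.neg_pi_lt_arg s; linarith
  have h2 : s.arg / 2 ≤ Real.pi / 2 := by
    have := Complex.arg_le_pi s; linarith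
  have := Real.cos_nonneg_of_mem_Icc ⟨h1, h2⟩
  positivity

lemma plate_denom_ne_zero (r : ℝ) (hr : 14 ≤ r) : (1 : ℂ) + 1 / rayPt r ≠ 0 := by
  have hr0 : (0 : ℝ) < r := by linarith
  have hka := rayPt_abs r hr0.le
  intro h
  have h2 : (1 : ℂ) / rayPt r = -1 := by linear_combination h
  have := congrArg (‖·‖) h2
  rw [norm_div, hka] at this
  simp at this
  rw [this] at hr
  linarith

/-- Main pointwise estimates on the ray. -/
lemma plate_key (U : ℝ) (r : ℝ) (hr : 14 + 2 * |U| ≤ r) :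
    (1 : ℝ) / 2 ≤ (plateRad U (rayPt r)).re ∧
    (plateOmegaMC U (rayPt r)).im ≤ -(r ^ 2) / 2 := by
  have hr14 : (14 : ℝ) ≤ r := by have : 0 ≤ |U| := abs_nonneg U; linarith
  have hrU : 2 * |U| ≤ r := by linarith
  have hr0 : (0 : ℝ) < r := by linarith
  set k := rayPt r with hkdef
  have hka : ‖k‖ = r := rayPt_abs r hr0.le
  have hk0 : k ≠ 0 := rayPt_ne_zero r hr0
  set s := plateRad U k with hsdef
  have hU2 : U ^ 2 ≤ r ^ 2 / 4 := by nlinarith [abs_nonneg U, sq_abs U]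
  have hs1 : ‖s - 1‖ ≤ 2 / r := by
    have h0 : s - 1 = 1 / k - (U : ℂ) ^ 2 / k ^ 3 := by rw [hsdef]; unfold plateRad; ring
    rw [h0]
    have h1 : ‖1 / k‖ = 1 / r := by simp [hka]
    have h2 : ‖(U : ℂ) ^ 2 / k ^ 3‖ = U ^ 2 / r ^ 3 := by
      rw [norm_div, norm_pow, norm_pow, hka, Complex.norm_real, Real.norm_eq_abs, sq_abs]
    calc ‖1 / k - (U : ℂ) ^ 2 / k ^ 3‖
        ≤ ‖1 / k‖ + ‖(U : ℂ) ^ 2 / k ^ 3‖ :=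
          norm_sub_le _ _
      _ = 1 / r + U ^ 2 / r ^ 3 := by rw [h1, h2]
      _ ≤ 1 / r + (r ^ 2 / 4) / r ^ 3 := by gcongr
      _ ≤ 2 / r := by
          rw [div_add_div _ _ (by positivity) (by positivity),
            div_le_div_iff₀ (by positivity) (by positivity)]
          nlinarith
  have hs1' : ‖s - 1‖ ≤ 1 / 7 := by
    have : 2 / r ≤ 2 / 14 := by gcongr
    linarith
  have hsre : (1 : ℝ) / 2 ≤ s.re := by
    have h := Complex.abs_re_le_norm (s - 1)
    have h2 : (s - 1).re = s.re - 1 := by simp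
    rw [h2] at h
    have := abs_le.mp (h.trans hs1')
    linarith [this.1]
  have hs0 : s ≠ 0 := by
    intro h; rw [h] at hsre; simp at hsre; linarith
  refine ⟨hsre, ?_⟩
  set w := s ^ ((1 : ℂ) / 2) with hwdef
  have hww : w * w = s := by
    rw [hwdef, ← Complex.cpow_add _ _ hs0]
    norm_num
  have hwre : 0 ≤ w.re := cpow_half_re_nonneg s hs0
  have hw1 : (1 : ℝ) ≤ ‖w + 1‖ := by
    have h := Complex.re_le_norm (w + 1)
    have h2 : (w + 1).re = w.re + 1 := by simp
    linarith [h2 ▸ h]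
  have hwm1 : ‖w - 1‖ ≤ 2 / r := by
    have hprod : (w - 1) * (w + 1) = s - 1 := by rw [← hww]; ring
    have habs : ‖w - 1‖ * ‖w + 1‖ = ‖s - 1‖ := by
      rw [← norm_mul, hprod]
    calc ‖w - 1‖ ≤ ‖w - 1‖ * ‖w + 1‖ :=
          le_mul_of_one_le_right (norm_nonneg _) hw1
      _ = ‖s - 1‖ := habs
      _ ≤ 2 / r := hs1
  set d := (1 : ℂ) + 1 / k with hddef
  have hd0 : d ≠ 0 := plate_denom_ne_zero r hr14
  have hd1 : ‖d - 1‖ = 1 / r := by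
    rw [hddef]; simp [hka]
  have hdre : (1 : ℝ) / 2 ≤ d.re := by
    have h := Complex.abs_re_le_norm (d - 1)
    rw [hd1] at h
    have h2 : (1 : ℝ) / r ≤ 1 / 14 := by gcongr
    have h3 : (d - 1).re = d.re - 1 := by simp
    rw [h3] at h
    have := abs_le.mp (h.trans h2)
    linarith [this.1]
  have hdabs : (1 : ℝ) / 2 ≤ ‖d‖ := le_trans hdre (Complex.re_le_norm d)
  set N := (U : ℂ) - k ^ 2 * (w - 1) + k with hNdef
  have homega : plateOmegaMC U k + k ^ 2 = N / d := by
    rw [eq_div_iff hd0]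
    unfold plateOmegaMC
    rw [← hsdef, ← hwdef, ← hddef]
    rw [add_mul, div_mul_cancel₀ _ hd0, hNdef, hddef]
    field_simp
    ring
  have hNabs : ‖N‖ ≤ |U| + 3 * r := by
    calc ‖N‖ ≤ ‖(U : ℂ) - k ^ 2 * (w - 1)‖ + ‖k‖ :=
          norm_add_le _ _
      _ ≤ ‖(U : ℂ)‖ + ‖k ^ 2 * (w - 1)‖ + ‖k‖ :=
          add_le_add_left (norm_sub_le _ _) _
      _ ≤ |U| + r ^ 2 * (2 / r) + r := by
          rw [Complex.norm_real, Real.norm_eq_abs, hka]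
          gcongr
          rw [norm_mul, norm_pow, hka]
          gcongr
      _ ≤ |U| + 3 * r := by
          have h : r ^ 2 * (2 / r) = 2 * r := by field_simp; try ring
          rw [h]; linarith
  have hNd : ‖plateOmegaMC U k + k ^ 2‖ ≤ 2 * (|U| + 3 * r) := by
    rw [homega, norm_div]
    rw [div_le_iff₀ (by linarith : (0:ℝ) < ‖d‖)]
    calc ‖N‖ ≤ |U| + 3 * r := hNabs
      _ = 2 * (|U| + 3 * r) * (1 / 2) := by ring
      _ ≤ 2 * (|U| + 3 * r) * ‖d‖ := by
          have h1 : (0:ℝ) ≤ 2 * (|U| + 3 * r) := by positivity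
          gcongr
  have hk2 : (k ^ 2).im = r ^ 2 := by
    rw [hkdef, rayPt_sq]
    simp [← Complex.ofReal_pow]
  have him : (plateOmegaMC U k).im ≤ -(r ^ 2) + 2 * (|U| + 3 * r) := by
    have h := Complex.abs_im_le_norm (plateOmegaMC U k + k ^ 2)
    have h2 : (plateOmegaMC U k + k ^ 2).im = (plateOmegaMC U k).im + r ^ 2 := by
      rw [Complex.add_im, hk2]
    rw [h2] at h
    have := abs_le.mp (h.trans hNd)
    linarith [this.2]
  have : 2 * (|U| + 3 * r) ≤ r ^ 2 / 2 := by nlinarith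
  linarith

/-- Gaussian decay along the ray `arg k = π/4`: there are `r₀ ≥ 1`, `C > 0`
such that the radicand avoids `(−∞,0]` on the ray beyond `r₀` and for all `t ∈ (0,1]`,
`∫_{r₀}^∞ |e^{−iω₋(re^{iπ/4})t}| dr ≤ C·t^{−1/2}`. -/
theorem kernel_weak_singularity_estimate (U : ℝ) :
    ∃ r₀ : ℝ, 1 ≤ r₀ ∧ ∃ C : ℝ, 0 < C ∧
      (∀ r : ℝ, r₀ ≤ r →
        ¬ ((plateRad U (rayPt r)).im = 0 ∧ (plateRad U (rayPt r)).re ≤ 0))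
      ∧ ∀ t : ℝ, 0 < t → t ≤ 1 →
        IntegrableOn
          (fun r => ‖Complex.exp (-Complex.I * plateOmegaMC U (rayPt r) * (t : ℂ))‖)
          (Set.Ioi r₀)
        ∧ ∫ r in Set.Ioi r₀,
            ‖Complex.exp (-Complex.I * plateOmegaMC U (rayPt r) * (t : ℂ))‖
          ≤ C * t ^ (-(1 / 2) : ℝ) := by
  have habs : (0:ℝ) ≤ |U| := abs_nonneg U
  refine ⟨14 + 2 * |U|, by linarith, Real.sqrt (2 * Real.pi),
    Real.sqrt_pos.mpr (by positivity), ?_, ?_⟩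
  · intro r hr ⟨_, hre⟩
    have := (plate_key U r hr).1
    linarith
  intro t ht ht1
  set r₀ := 14 + 2 * |U| with hr₀def
  have hr₀14 : (14:ℝ) ≤ r₀ := by rw [hr₀def]; linarith
  set f := fun r => ‖Complex.exp (-Complex.I * plateOmegaMC U (rayPt r) * (t : ℂ))‖
    with hfdef
  have hfeq : ∀ r : ℝ, f r = Real.exp (t * (plateOmegaMC U (rayPt r)).im) := by
    intro r
    rw [hfdef]
    simp only []
    rw [Complex.norm_exp]
    congr 1
    simp [Complex.mul_re, Complex.mul_im]
    ring
  have hfle : ∀ r ∈ Set.Ioi r₀, f r ≤ Real.exp (-(t / 2) * r ^ 2) := by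
    intro r hrr
    have hkey := (plate_key U r (le_of_lt hrr)).2
    rw [hfeq r]
    apply Real.exp_le_exp.mpr
    nlinarith
  -- continuity on Ioi r₀
  have hcont : ContinuousOn f (Set.Ioi r₀) := by
    intro r hrr
    have hr : r₀ ≤ r := le_of_lt hrr
    have hr0 : (0 : ℝ) < r := by linarith
    have hk0 : rayPt r ≠ 0 := rayPt_ne_zero r hr0
    have hd0 : (1 : ℂ) + 1 / rayPt r ≠ 0 := plate_denom_ne_zero r (by linarith)
    have hck : ContinuousAt rayPt r := by
      unfold rayPt; fun_prop
    have hcs : ContinuousAt (fun x : ℝ => plateRad U (rayPt x)) r := by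
      unfold plateRad
      exact (((continuousAt_const.add
        (continuousAt_const.div hck hk0))).sub
        (continuousAt_const.div (hck.pow 3) (pow_ne_zero 3 hk0)))
    have hslit : plateRad U (rayPt r) ∈ Complex.slitPlane := by
      rw [Complex.mem_slitPlane_iff]
      left
      have := (plate_key U r hr).1
      linarith
    have hcw : ContinuousAt (fun x : ℝ => plateRad U (rayPt x) ^ ((1:ℂ)/2)) r :=
      hcs.cpow continuousAt_const hslit
    have hcω : ContinuousAt (fun x : ℝ => plateOmegaMC U (rayPt x)) r := by
      unfold plateOmegaMC
      exact (continuousAt_const.sub ((hck.pow 2).mul hcw)).div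
        (continuousAt_const.add (continuousAt_const.div hck hk0)) hd0
    have : ContinuousAt f r := by
      rw [hfdef]
      exact continuous_norm.continuousAt.comp
        (Complex.continuous_exp.continuousAt.comp
          ((continuousAt_const.mul hcω).mul continuousAt_const))
    exact this.continuousWithinAt
  have hmeas : AEStronglyMeasurable f (volume.restrict (Set.Ioi r₀)) :=
    hcont.aestronglyMeasurable measurableSet_Ioi
  have hg : Integrable (fun r : ℝ => Real.exp (-(t/2) * r ^ 2)) :=
    integrable_exp_neg_mul_sq (by positivity)
  have hgOn : IntegrableOn (fun r : ℝ => Real.exp (-(t/2) * r ^ 2)) (Set.Ioi r₀) :=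
    hg.integrableOn
  have hfint : IntegrableOn f (Set.Ioi r₀) := by
    apply Integrable.mono hgOn hmeas
    filter_upwards [ae_restrict_mem measurableSet_Ioi] with r hrr
    rw [Real.norm_eq_abs, Real.norm_eq_abs, abs_of_nonneg (norm_nonneg _ : (0:ℝ) ≤ f r),
      abs_of_nonneg (Real.exp_pos _).le]
    exact hfle r hrr
  refine ⟨hfint, ?_⟩
  have hbound : ∫ r in Set.Ioi r₀, f r ≤ Real.sqrt (Real.pi / (t/2)) := by
    calc ∫ r in Set.Ioi r₀, f r
        ≤ ∫ r in Set.Ioi r₀, Real.exp (-(t/2) * r ^ 2) :=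
          setIntegral_mono_on hfint hgOn measurableSet_Ioi hfle
      _ ≤ ∫ r : ℝ, Real.exp (-(t/2) * r ^ 2) :=
          setIntegral_le_integral hg (ae_of_all _ fun x => (Real.exp_pos _).le)
      _ = Real.sqrt (Real.pi / (t/2)) := integral_gaussian (t/2)
  have heq : Real.sqrt (Real.pi / (t/2)) = Real.sqrt (2 * Real.pi) * t ^ (-(1 / 2) : ℝ) := by
    have h1 : Real.pi / (t/2) = (2 * Real.pi) / t := by
      field_simp
    rw [h1, Real.sqrt_div (by positivity) t]
    rw [Real.rpow_neg ht.le, ← Real.sqrt_eq_rpow, div_eq_mul_inv]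
  rw [← heq]
  exact hbound
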